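/- arXiv:1604.05902 — 3 statements merged into one kernel-verified Lean document; each statement's English description precedes it below -/
import Mathlib

section
/- Let G be a finite non-abelian group that is 5-centralizer, i.e., the set {C_G(x) : x ∈ G} of centralizers of elements of G has exactly 5 members. Then G is commuting integral, i.e., every eigenvalue of the adjacency matrix of the commuting graph Γ_G (over the reals) is an integer. -/
open Polynomial

set_option linter.unusedSectionVars false

section KeyLemma

variable {G : Type*} [Group G] [Fintype G]

private lemma my_centralizer_one_top : Subgroup.centralizer ({(1:G)} : Set G) = ⊤ := by
  ext g; simp [Subgroup.mem_centralizer_singleton_iff]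

/-- In a 5-centralizer group, any two elements commuting with a common
non-central element commute with each other. -/
lemma five_centralizer_comm
    (h5 : Nat.card (Set.range fun x : G => Subgroup.centralizer ({x} : Set G)) = 5)
    {x a b : G} (hx : x ∉ Subgroup.center G)
    (hxa : x * a = a * x) (hxb : x * b = b * x) : a * b = b * a := by
  by_contra hab
  set C : G → Subgroup G := fun g => Subgroup.centralizer {g} with hCdef
  have m : ∀ g k : G, k ∈ C g ↔ k * g = g * k := fun g k =>
    Subgroup.mem_centralizer_singleton_iff
  have hxab : x * (a * b) = (a * b) * x := by
    rw [← mul_assoc, hxa, mul_assoc, hxb, ← mul_assoc]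
  -- membership facts
  have haCx : a ∈ C x := (m x a).2 hxa.symm
  have hbCx : b ∈ C x := (m x b).2 hxb.symm
  have hbCa : b ∉ C a := fun h => hab ((m a b).1 h).symm
  have haCb : a ∉ C b := fun h => hab ((m b a).1 h)
  have haCab : a ∉ C (a * b) := by
    intro h
    have h1 : a * (a * b) = (a * b) * a := (m _ _).1 h
    exact hab (mul_left_cancel (h1.trans (mul_assoc a b a)))
  have hbCab : b ∉ C (a * b) := by
    intro h
    have h1 : b * (a * b) = (a * b) * b := (m _ _).1 h
    exact hab (mul_right_cancel ((mul_assoc b a b).trans h1)).symm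
  have haCxa : a ∈ C (x * a) := by
    refine (m _ _).2 ?_
    rw [← mul_assoc, hxa.symm, mul_assoc]
  have hbCxa : b ∉ C (x * a) := by
    intro h
    have h1 : b * (x * a) = (x * a) * b := (m _ _).1 h
    have h2 : x * (b * a) = x * (a * b) := by
      calc x * (b * a) = (x * b) * a := (mul_assoc _ _ _).symm
        _ = (b * x) * a := by rw [hxb]
        _ = b * (x * a) := mul_assoc _ _ _
        _ = (x * a) * b := h1
        _ = x * (a * b) := mul_assoc _ _ _
    exact hab (mul_left_cancel h2).symm
  have hbCxb : b ∈ C (x * b) := by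
    refine (m _ _).2 ?_
    rw [← mul_assoc, hxb.symm, mul_assoc]
  have haCxb : a ∉ C (x * b) := by
    intro h
    have h1 : a * (x * b) = (x * b) * a := (m _ _).1 h
    have h2 : x * (a * b) = x * (b * a) := by
      calc x * (a * b) = (x * a) * b := (mul_assoc _ _ _).symm
        _ = (a * x) * b := by rw [hxa]
        _ = a * (x * b) := mul_assoc _ _ _
        _ = (x * b) * a := h1
        _ = x * (b * a) := mul_assoc _ _ _
    exact hab (mul_left_cancel h2)
  have habCxab : (a * b) ∈ C (x * (a * b)) := by
    refine (m _ _).2 ?_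
    rw [← mul_assoc, hxab.symm, mul_assoc]
  have haCxab : a ∉ C (x * (a * b)) := by
    intro h
    have h1 : a * (x * (a * b)) = (x * (a * b)) * a := (m _ _).1 h
    have h2 : x * (a * (a * b)) = x * ((a * b) * a) := by
      calc x * (a * (a * b)) = (x * a) * (a * b) := (mul_assoc _ _ _).symm
        _ = (a * x) * (a * b) := by rw [hxa]
        _ = a * (x * (a * b)) := mul_assoc _ _ _
        _ = (x * (a * b)) * a := h1
        _ = x * ((a * b) * a) := mul_assoc _ _ _
    have h3 := mul_left_cancel h2
    exact hab (mul_left_cancel (h3.trans (mul_assoc a b a)))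
  have hbCxab : b ∉ C (x * (a * b)) := by
    intro h
    have h1 : b * (x * (a * b)) = (x * (a * b)) * b := (m _ _).1 h
    have h2 : x * (b * (a * b)) = x * ((a * b) * b) := by
      calc x * (b * (a * b)) = (x * b) * (a * b) := (mul_assoc _ _ _).symm
        _ = (b * x) * (a * b) := by rw [hxb]
        _ = b * (x * (a * b)) := mul_assoc _ _ _
        _ = (x * (a * b)) * b := h1
        _ = x * ((a * b) * b) := mul_assoc _ _ _
    have h3 := mul_left_cancel h2
    exact hab (mul_right_cancel ((mul_assoc b a b).trans h3)).symm
  have hCxtop : C x ≠ ⊤ := by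
    intro h
    refine hx (Subgroup.mem_center_iff.2 fun g => ?_)
    exact (m x g).1 (h ▸ Subgroup.mem_top g)
  -- the range of centralizers
  have hRfin : (Set.range fun g : G => Subgroup.centralizer ({g} : Set G)).Finite :=
    Set.finite_range _
  set R : Set (Subgroup G) := Set.range fun g : G => Subgroup.centralizer ({g} : Set G)
    with hRdef
  have hmemR : ∀ g : G, C g ∈ R := fun g => ⟨g, rfl⟩
  set T : Set (Subgroup G) := {⊤, C x, C a, C b, C (a*b)} with hTdef
  have hTR : T ⊆ R := by
    rintro s hs
    simp only [hTdef, Set.mem_insert_iff, Set.mem_singleton_iff] at hs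
    rcases hs with rfl | rfl | rfl | rfl | rfl
    · exact ⟨1, my_centralizer_one_top⟩
    · exact hmemR x
    · exact hmemR a
    · exact hmemR b
    · exact hmemR (a*b)
  -- distinctness
  have netop : ∀ s : Subgroup G, ∀ g : G, g ∉ s → ⊤ ≠ s := by
    intro s g hg h; exact hg (h ▸ Subgroup.mem_top g)
  have ne1 : (⊤ : Subgroup G) ≠ C x := Ne.symm (fun h => hCxtop h)
  have ne2 : (⊤ : Subgroup G) ≠ C a := netop _ b hbCa
  have ne3 : (⊤ : Subgroup G) ≠ C b := netop _ a haCb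
  have ne4 : (⊤ : Subgroup G) ≠ C (a*b) := netop _ a haCab
  have ne5 : C x ≠ C a := fun h => hbCa (h ▸ hbCx)
  have ne6 : C x ≠ C b := fun h => haCb (h ▸ haCx)
  have ne7 : C x ≠ C (a*b) := fun h => haCab (h ▸ haCx)
  have ne8 : C a ≠ C b := fun h => haCb (h ▸ (m a a).2 rfl)
  have ne9 : C a ≠ C (a*b) := fun h => haCab (h ▸ (m a a).2 rfl)
  have ne10 : C b ≠ C (a*b) := fun h => hbCab (h ▸ (m b b).2 rfl)
  have hT5 : T.ncard = 5 := by
    rw [hTdef]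
    rw [Set.ncard_insert_of_notMem (by simp [ne1, ne2, ne3, ne4]) (Set.toFinite _),
        Set.ncard_insert_of_notMem (by simp [ne5, ne6, ne7]) (Set.toFinite _),
        Set.ncard_insert_of_notMem (by simp [ne8, ne9]) (Set.toFinite _),
        Set.ncard_insert_of_notMem (by simp [ne10]) (Set.toFinite _),
        Set.ncard_singleton]
  have hR5 : R.ncard = 5 := by rw [← Nat.card_coe_set_eq]; exact h5
  have hTReq : T = R := Set.eq_of_subset_of_ncard_le hTR (by rw [hR5, hT5]) hRfin
  have hcases : ∀ g : G, C g = ⊤ ∨ C g = C x ∨ C g = C a ∨ C g = C b ∨ C g = C (a*b) := by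
    intro g
    have : C g ∈ T := hTReq ▸ hmemR g
    simpa only [hTdef, Set.mem_insert_iff, Set.mem_singleton_iff] using this
  -- a cancellation helper : if g commutes with w and with x*w then g commutes with x
  have cancel : ∀ w g : G, g * w = w * g → g * (x * w) = (x * w) * g → g ∈ C x := by
    intro w g hgw hgxw
    refine (m x g).2 ?_
    have h1 : (g * x) * w = (x * g) * w := by
      calc (g * x) * w = g * (x * w) := mul_assoc _ _ _
        _ = (x * w) * g := hgxw
        _ = x * (w * g) := mul_assoc _ _ _
        _ = x * (g * w) := by rw [hgw]
        _ = (x * g) * w := (mul_assoc _ _ _).symm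
    exact mul_right_cancel h1
  -- C (x*a) = C a, hence C a ≤ C x
  have hCa_sub : ∀ g : G, g ∈ C a → g ∈ C x := by
    have hxaCa : C (x*a) = C a := by
      rcases hcases (x*a) with h | h | h | h | h
      · exact absurd (h ▸ Subgroup.mem_top b) hbCxa
      · exact absurd (h ▸ hbCx) hbCxa
      · exact h
      · exact absurd (h ▸ haCxa) haCb
      · exact absurd (h ▸ haCxa) haCab
    intro g hg
    have hg2 : g ∈ C (x*a) := hxaCa ▸ hg
    exact cancel a g ((m a g).1 hg) ((m _ _).1 hg2)
  have hCb_sub : ∀ g : G, g ∈ C b → g ∈ C x := by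
    have hxbCb : C (x*b) = C b := by
      rcases hcases (x*b) with h | h | h | h | h
      · exact absurd (h ▸ Subgroup.mem_top a) haCxb
      · exact absurd (h ▸ haCx) haCxb
      · exact absurd (h ▸ hbCxb) hbCa
      · exact h
      · exact absurd (h ▸ hbCxb) hbCab
    intro g hg
    have hg2 : g ∈ C (x*b) := hxbCb ▸ hg
    exact cancel b g ((m b g).1 hg) ((m _ _).1 hg2)
  have hCab_sub : ∀ g : G, g ∈ C (a*b) → g ∈ C x := by
    have hxabCab : C (x*(a*b)) = C (a*b) := by
      rcases hcases (x*(a*b)) with h | h | h | h | h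
      · exact absurd (h ▸ Subgroup.mem_top a) haCxab
      · exact absurd (h ▸ haCx) haCxab
      · exact absurd (h ▸ (m a a).2 rfl) (fun hh => haCxab (h ▸ hh))
      · exact absurd (h ▸ (m b b).2 rfl) (fun hh => hbCxab (h ▸ hh))
      · exact h
    intro g hg
    have hg2 : g ∈ C (x*(a*b)) := hxabCab ▸ hg
    exact cancel (a*b) g ((m _ _).1 hg) ((m _ _).1 hg2)
  -- conclude x is central
  refine hx (Subgroup.mem_center_iff.2 fun g => ?_)
  have hgx : g ∈ C x := by
    rcases hcases g with h | h | h | h | h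
    · have : x ∈ C g := h ▸ Subgroup.mem_top x
      exact (m x g).2 ((m g x).1 this).symm
    · exact h ▸ (m g g).2 rfl
    · exact hCa_sub g (h ▸ (m g g).2 rfl)
    · exact hCb_sub g (h ▸ (m g g).2 rfl)
    · exact hCab_sub g (h ▸ (m g g).2 rfl)
  exact (m x g).1 hgx

end KeyLemma

/-- The commuting graph of a group `G`: vertices are the non-central elements,
two distinct vertices are adjacent iff they commute. -/
def commutingGraph (G : Type*) [Group G] : SimpleGraph {x : G // x ∉ Subgroup.center G} where
  Adj x y := x ≠ y ∧ (x : G) * y = (y : G) * x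
  symm := by constructor; rintro x y ⟨hne, hc⟩; exact ⟨hne.symm, hc.symm⟩
  loopless := by constructor; rintro x ⟨hne, _⟩; exact hne rfl

open scoped Classical in
/-- The characteristic polynomial (over `ℝ`) of the adjacency matrix of the
commuting graph of `G`. -/
noncomputable def commCharpoly (G : Type*) [Group G] [Fintype G] : Polynomial ℝ :=
  ((commutingGraph G).adjMatrix ℝ).charpoly

theorem commuting_integral_of_five_centralizer
    (G : Type*) [Group G] [Fintype G]
    (hna : ∃ a b : G, a * b ≠ b * a)
    (h5 : Nat.card (Set.range fun x : G => Subgroup.centralizer ({x} : Set G)) = 5) :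
    ∀ μ : ℝ, (commCharpoly G).IsRoot μ → ∃ k : ℤ, μ = (k : ℝ) := by
  have hcomm : ∀ x a b : G, x ∉ Subgroup.center G → x * a = a * x → x * b = b * x →
      a * b = b * a := fun x a b hx hxa hxb => five_centralizer_comm h5 hx hxa hxb
  classical
  intro μ hroot
  rw [commCharpoly] at hroot
  set V := {x : G // x ∉ Subgroup.center G}
  set A := (commutingGraph G).adjMatrix ℝ with hA
  -- det (scalar μ - A) = 0
  have hdet : (Matrix.scalar V μ - A).det = 0 := by
    have h0 : Polynomial.eval μ A.charpoly = 0 := hroot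
    rw [Matrix.charpoly, eval_det, Matrix.matPolyEquiv_charmatrix] at h0
    rwa [Polynomial.eval_sub, Polynomial.eval_X, Polynomial.eval_C] at h0
  obtain ⟨v, hv0, hveq⟩ := Matrix.exists_mulVec_eq_zero_iff.2 hdet
  have hAv : A.mulVec v = fun p => μ * v p := by
    funext p
    have h1 := congrFun hveq p
    have h2 : ((Matrix.scalar V μ).mulVec v) p = μ * v p := by
      simp [Matrix.mulVec, Matrix.scalar, dotProduct, Matrix.diagonal]
      convert Finset.sum_ite_eq Finset.univ p (fun x => μ * v x) using 1
      simp
    rw [Matrix.sub_mulVec] at h1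
    simp only [Pi.sub_apply, Pi.zero_apply, sub_eq_zero] at h1
    rw [← h1]; exact h2
  have hmv : ∀ p : V, ∑ q ∈ (commutingGraph G).neighborFinset p, v q = μ * v p := by
    intro p
    have h := congrFun hAv p
    rwa [hA, SimpleGraph.adjMatrix_mulVec_apply] at h
  set F : V → Finset V := fun p =>
    Finset.univ.filter (fun q : V => (p : G) * (q : G) = (q : G) * (p : G)) with hF
  have hfilter : ∀ p : V, F p = insert p ((commutingGraph G).neighborFinset p) := by
    intro p
    ext q
    simp only [Finset.mem_insert, SimpleGraph.mem_neighborFinset]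
    simp only [hF, Finset.mem_filter, Finset.mem_univ, true_and, Finset.mem_insert,
      SimpleGraph.mem_neighborFinset, commutingGraph]
    constructor
    · intro h
      by_cases hq : q = p
      · exact Or.inl hq
      · exact Or.inr ⟨fun e => hq e.symm, h⟩
    · rintro (rfl | ⟨-, h⟩)
      · rfl
      · exact h
  set S : V → ℝ := fun p => ∑ q ∈ F p, v q with hS
  have hSval : ∀ p, S p = (μ + 1) * v p := by
    intro p
    have : S p = v p + ∑ q ∈ (commutingGraph G).neighborFinset p, v q := by
      rw [hS]
      simp only []
      rw [hfilter p, Finset.sum_insert (SimpleGraph.notMem_neighborFinset_self _ _)]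
    rw [this, hmv p]; ring
  have hSeqclass : ∀ p r : V, (p : G) * (r : G) = (r : G) * (p : G) → S p = S r := by
    intro p r hpr
    have hFeq : F p = F r := by
      ext q
      simp only [hF, Finset.mem_filter, Finset.mem_univ, true_and]
      exact ⟨fun h => hcomm p r q p.2 hpr h, fun h => hcomm r p q r.2 hpr.symm h⟩
    simp only [hS, hFeq]
  have hcard : ∀ p : V, ((F p).card : ℝ) * S p = (μ + 1) * S p := by
    intro p
    calc ((F p).card : ℝ) * S p = ∑ _r ∈ F p, S p := by rw [Finset.sum_const, nsmul_eq_mul]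
      _ = ∑ r ∈ F p, S r := Finset.sum_congr rfl (fun r hr =>
          hSeqclass p r (by simpa [hF] using (Finset.mem_filter.1 hr).2))
      _ = ∑ r ∈ F p, (μ + 1) * v r := Finset.sum_congr rfl (fun r _ => hSval r)
      _ = (μ + 1) * ∑ r ∈ F p, v r := by rw [Finset.mul_sum]
      _ = (μ + 1) * S p := rfl
  obtain ⟨p, hp⟩ := Function.ne_iff.1 hv0
  have hp' : v p ≠ 0 := hp
  by_cases hmu : μ + 1 = 0
  · exact ⟨-1, by push_cast; linarith⟩
  · have hSp : S p ≠ 0 := by rw [hSval p]; exact mul_ne_zero hmu hp'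
    have h1 : ((F p).card : ℝ) = μ + 1 := mul_right_cancel₀ hSp (hcard p)
    exact ⟨((F p).card : ℤ) - 1, by push_cast; linarith⟩
end

section
/- Let G be a finite non-abelian group and let {x₁, …, x_r} be a set of pairwise non-commuting elements of G of maximal size among all sets of pairwise non-commuting elements of G. If r = 3 or r = 4, then G is commuting integral, i.e., every eigenvalue of the adjacency matrix of the commuting graph Γ_G (over the reals) is an integer. -/
open Polynomial

section GroupAux

variable {G : Type*} [Group G]

private lemma ncne {a b : G} (h : a * b ≠ b * a) : a ≠ b := fun e => h (by rw [e])

private lemma cancel_left' {a b c : G} (h1 : Commute a b) (h : Commute a (b * c)) :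
    Commute a c := by
  have h2 := h1.inv_right.mul_right h
  rwa [inv_mul_cancel_left] at h2

private lemma cancel_right' {a b c : G} (h1 : Commute a c) (h : Commute a (b * c)) :
    Commute a b := by
  have h2 := h.mul_right h1.inv_right
  rwa [mul_inv_cancel_right] at h2

private lemma five_noncomm
    (hb : ∀ T : Finset G, (∀ x ∈ T, ∀ y ∈ T, x ≠ y → x * y ≠ y * x) → T.card ≤ 4)
    (a b c d e : G)
    (h1 : a*b ≠ b*a) (h2 : a*c ≠ c*a) (h3 : a*d ≠ d*a) (h4 : a*e ≠ e*a)
    (h5 : b*c ≠ c*b) (h6 : b*d ≠ d*b) (h7 : b*e ≠ e*b)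
    (h8 : c*d ≠ d*c) (h9 : c*e ≠ e*c) (h10 : d*e ≠ e*d) : False := by
  classical
  have hprop : ∀ x ∈ ({a,b,c,d,e} : Finset G), ∀ y ∈ ({a,b,c,d,e} : Finset G),
      x ≠ y → x * y ≠ y * x := by
    intro x hx y hy hxy
    simp only [Finset.mem_insert, Finset.mem_singleton] at hx hy
    rcases hx with rfl|rfl|rfl|rfl|rfl <;> rcases hy with rfl|rfl|rfl|rfl|rfl <;>
      first
        | exact absurd rfl hxy
        | assumption
        | exact fun h => h1 h.symm
        | exact fun h => h2 h.symm
        | exact fun h => h3 h.symm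
        | exact fun h => h4 h.symm
        | exact fun h => h5 h.symm
        | exact fun h => h6 h.symm
        | exact fun h => h7 h.symm
        | exact fun h => h8 h.symm
        | exact fun h => h9 h.symm
        | exact fun h => h10 h.symm
  have nab := ncne h1; have nac := ncne h2; have nad := ncne h3; have nae := ncne h4
  have nbc := ncne h5; have nbd := ncne h6; have nbe := ncne h7
  have ncd := ncne h8; have nce := ncne h9; have nde := ncne h10
  have hcard : ({a,b,c,d,e} : Finset G).card = 5 := by
    rw [Finset.card_insert_of_notMem (by simp [nab, nac, nad, nae]),
        Finset.card_insert_of_notMem (by simp [nbc, nbd, nbe]),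
        Finset.card_insert_of_notMem (by simp [ncd, nce]),
        Finset.card_insert_of_notMem (by simp [nde]),
        Finset.card_singleton]
  have := hb _ hprop
  omega

/-- Shape 1 : if `p q ∈ C(y)` don't commute and `w` commutes with none of
`y, p, q, p*q`, then `{p, q, p*q, w, w*y}` are five pairwise non-commuting elements. -/
private lemma shape1
    (hb : ∀ T : Finset G, (∀ x ∈ T, ∀ y ∈ T, x ≠ y → x * y ≠ y * x) → T.card ≤ 4)
    {y p q w : G} (hpy : p*y = y*p) (hqy : q*y = y*q) (hpq : p*q ≠ q*p)
    (hwy : w*y ≠ y*w) (hwp : w*p ≠ p*w) (hwq : w*q ≠ q*w)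
    (hwpq : w*(p*q) ≠ (p*q)*w) : False := by
  have cpy : Commute p y := hpy
  have cqy : Commute q y := hqy
  refine five_noncomm hb p q (p*q) w (w*y) hpq ?_ ?_ ?_ ?_ ?_ ?_ ?_ ?_ ?_
  · intro h
    have hc : Commute p (p*q) := h
    exact hpq (cancel_left' (Commute.refl p) hc).eq
  · intro h
    have hc : Commute p w := h
    exact hwp hc.symm.eq
  · intro h
    have hc : Commute p (w*y) := h
    exact hwp (cancel_right' cpy hc).symm.eq
  · intro h
    have hc : Commute q (p*q) := h
    exact hpq (cancel_right' (Commute.refl q) hc).symm.eq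
  · intro h
    have hc : Commute q w := h
    exact hwq hc.symm.eq
  · intro h
    have hc : Commute q (w*y) := h
    exact hwq (cancel_right' cqy hc).symm.eq
  · intro h
    have hc : Commute (p*q) w := h
    exact hwpq hc.symm.eq
  · intro h
    have hc : Commute (p*q) (w*y) := h
    have cpqy : Commute (p*q) y := cpy.mul_left cqy
    exact hwpq (cancel_right' cpqy hc).symm.eq
  · intro h
    have hc : Commute w (w*y) := h
    exact hwy (cancel_left' (Commute.refl w) hc).eq

/-- Shape 2 : if `P, Q ∈ C(y)` don't commute, `w` commutes with `P` and `Q` but not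
with `y`, then `{P, Q, P*Q*y, P*Q*w, P*Q*y*w}` are five pairwise non-commuting elements. -/
private lemma shape2
    (hb : ∀ T : Finset G, (∀ x ∈ T, ∀ y ∈ T, x ≠ y → x * y ≠ y * x) → T.card ≤ 4)
    {y P Q w : G} (hPy : P*y = y*P) (hQy : Q*y = y*Q) (hPQ : P*Q ≠ Q*P)
    (hwP : w*P = P*w) (hwQ : w*Q = Q*w) (hwy : w*y ≠ y*w) : False := by
  have cPy : Commute P y := hPy
  have cQy : Commute Q y := hQy
  have cwP : Commute w P := hwP
  have cwQ : Commute w Q := hwQ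
  have cy : Commute (P*Q) y := cPy.mul_left cQy
  have cw : Commute w (P*Q) := cwP.mul_right cwQ
  have key8 : Commute ((P*Q)*y) ((P*Q)*w) → False := by
    intro h
    have c1 : Commute ((P*Q)*y) (P*Q) := Commute.mul_left (Commute.refl (P*Q)) cy.symm
    have c2 : Commute ((P*Q)*y) w := cancel_left' c1 h
    exact hwy (cancel_left' cw c2.symm).eq
  have redP : Commute P (P*Q) → False := fun h =>
    hPQ (cancel_left' (Commute.refl P) h).eq
  have redQ : Commute Q (P*Q) → False := fun h =>
    hPQ (cancel_right' (Commute.refl Q) h).symm.eq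
  refine five_noncomm hb P Q ((P*Q)*y) ((P*Q)*w) (((P*Q)*y)*w) hPQ ?_ ?_ ?_ ?_ ?_ ?_ ?_ ?_ ?_
  · intro h
    have hc : Commute P ((P*Q)*y) := h
    exact redP (cancel_right' cPy hc)
  · intro h
    have hc : Commute P ((P*Q)*w) := h
    exact redP (cancel_right' cwP.symm hc)
  · intro h
    have hc : Commute P (((P*Q)*y)*w) := h
    have h2 := cancel_right' cwP.symm hc
    exact redP (cancel_right' cPy h2)
  · intro h
    have hc : Commute Q ((P*Q)*y) := h
    exact redQ (cancel_right' cQy hc)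
  · intro h
    have hc : Commute Q ((P*Q)*w) := h
    exact redQ (cancel_right' cwQ.symm hc)
  · intro h
    have hc : Commute Q (((P*Q)*y)*w) := h
    have h2 := cancel_right' cwQ.symm hc
    exact redQ (cancel_right' cQy h2)
  · intro h
    have hc : Commute ((P*Q)*y) ((P*Q)*w) := h
    exact key8 hc
  · intro h
    have hc : Commute ((P*Q)*y) (((P*Q)*y)*w) := h
    have c2 : Commute ((P*Q)*y) w := cancel_left' (Commute.refl ((P*Q)*y)) hc
    exact hwy (cancel_left' cw c2.symm).eq
  · intro h
    have hc : Commute ((P*Q)*w) (((P*Q)*y)*w) := h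
    have c1 : Commute ((P*Q)*w) w := Commute.mul_left cw.symm (Commute.refl w)
    have c2 : Commute ((P*Q)*w) ((P*Q)*y) := cancel_right' c1 hc
    exact key8 c2.symm

private lemma core
    (hb : ∀ T : Finset G, (∀ x ∈ T, ∀ y ∈ T, x ≠ y → x * y ≠ y * x) → T.card ≤ 4)
    {y w u v : G} (hwy : w*y ≠ y*w)
    (huy : u*y = y*u) (hvy : v*y = y*v) (huv : u*v ≠ v*u)
    (hwu : w*u ≠ u*w) (hwv : w*v ≠ v*w) : False := by
  have cuy : Commute u y := huy
  have cvy : Commute v y := hvy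
  -- w commutes with u*v and with v*u
  have huvw : Commute w (u*v) := by
    by_contra h
    exact shape1 hb huy hvy huv hwy hwu hwv h
  have hvuw : Commute w (v*u) := by
    by_contra h
    exact shape1 hb hvy huy (fun e => huv e.symm) hwy hwv hwu h
  -- w commutes with y*v
  have hyv : Commute w (y*v) := by
    by_contra h
    by_cases h2 : Commute w (u*(y*v))
    · have h3 : Commute w (y*(u*v)) := by
        rwa [show u*(y*v) = y*(u*v) by rw [← mul_assoc, huy, mul_assoc]] at h2
      exact hwy (cancel_right' huvw h3).eq
    · refine shape1 hb huy ?_ ?_ hwy hwu (fun e => h e) (fun e => h2 e)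
      · rw [mul_assoc, hvy, ← mul_assoc]
      · intro e
        apply huv
        have e2 : y*(u*v) = y*(v*u) := by
          rw [← mul_assoc, ← huy, mul_assoc, e, mul_assoc]
        exact mul_left_cancel e2
  -- w commutes with y*u
  have hyu : Commute w (y*u) := by
    by_contra h
    by_cases h2 : Commute w (v*(y*u))
    · have h3 : Commute w (y*(v*u)) := by
        rwa [show v*(y*u) = y*(v*u) by rw [← mul_assoc, hvy, mul_assoc]] at h2
      exact hwy (cancel_right' hvuw h3).eq
    · refine shape1 hb hvy ?_ ?_ hwy hwv (fun e => h e) (fun e => h2 e)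
      · rw [mul_assoc, huy, ← mul_assoc]
      · intro e
        apply huv
        have e2 : y*(v*u) = y*(u*v) := by
          rw [← mul_assoc, ← hvy, mul_assoc, e, mul_assoc]
        exact (mul_left_cancel e2).symm
  -- final contradiction with shape2 applied to P = y*u, Q = y*v
  have e1 : (y*u)*(y*v) = y*(y*(u*v)) := by
    rw [mul_assoc, ← mul_assoc u, huy, mul_assoc]
  have e2 : (y*v)*(y*u) = y*(y*(v*u)) := by
    rw [mul_assoc, ← mul_assoc v, hvy, mul_assoc]
  refine shape2 hb (y := y) (P := y*u) (Q := y*v) (w := w) ?_ ?_ ?_ hyu.eq hyv.eq hwy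
  · rw [mul_assoc, huy]
  · rw [mul_assoc, hvy]
  · intro h0
    apply huv
    have : y*(y*(u*v)) = y*(y*(v*u)) := by rw [← e1, ← e2]; exact h0
    exact mul_left_cancel (mul_left_cancel this)

/-- If every pairwise non-commuting set has at most 4 elements, then the centralizer
of every non-central element is abelian. -/
private lemma centralizer_comm
    (hb : ∀ T : Finset G, (∀ x ∈ T, ∀ y ∈ T, x ≠ y → x * y ≠ y * x) → T.card ≤ 4)
    (y : G) (hy : ∃ w : G, w * y ≠ y * w)
    (p q : G) (hpy : p*y = y*p) (hqy : q*y = y*q) : p*q = q*p := by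
  by_contra hpq
  obtain ⟨w, hwy⟩ := hy
  by_cases hwp : w*p = p*w
  · by_cases hwq : w*q = q*w
    · exact shape2 hb hpy hqy hpq hwp hwq hwy
    · -- use pair (p*y, q)
      refine core hb hwy (u := p*y) (v := q) ?_ hqy ?_ ?_ hwq
      · rw [← mul_assoc, ← hpy]
      · intro e
        apply hpq
        have e2 : (p*q)*y = (q*p)*y := by
          rw [mul_assoc, hqy, ← mul_assoc, e, ← mul_assoc]
        exact mul_right_cancel e2
      · intro e
        apply hwy
        have e2 : p*(w*y) = p*(y*w) := by
          rw [← mul_assoc, ← hwp, mul_assoc, e, mul_assoc]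
        exact mul_left_cancel e2
  · by_cases hwq : w*q = q*w
    · -- use pair (p, q*y)
      refine core hb hwy (u := p) (v := q*y) hpy ?_ ?_ hwp ?_
      · rw [← mul_assoc, ← hqy]
      · intro e
        apply hpq
        have e2 : (p*q)*y = (q*p)*y := by
          rw [mul_assoc, e, mul_assoc, ← hpy, ← mul_assoc]
        exact mul_right_cancel e2
      · intro e
        apply hwy
        have e2 : q*(w*y) = q*(y*w) := by
          rw [← mul_assoc, ← hwq, mul_assoc, e, mul_assoc]
        exact mul_left_cancel e2
    · exact core hb hwy hpy hqy hpq hwp hwq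

/-- Evaluation of the characteristic polynomial. -/
private lemma eval_charpoly' {n : Type*} [DecidableEq n] [Fintype n]
    (M : Matrix n n ℝ) (μ : ℝ) :
    (M.charpoly).eval μ = (Matrix.diagonal (fun _ => μ) - M).det := by
  rw [Matrix.charpoly, ← Polynomial.coe_evalRingHom, RingHom.map_det]
  congr 1
  ext i j
  by_cases h : i = j
  · subst h
    simp [Matrix.charmatrix_apply_eq]
  · simp [Matrix.charmatrix_apply_ne _ _ _ h, Matrix.diagonal_apply_ne _ h]

end GroupAux

theorem commuting_integral_of_max_noncommuting_set_three_or_four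
    (G : Type*) [Group G] [Fintype G]
    (hna : ∃ a b : G, a * b ≠ b * a)
    (S : Finset G) (r : ℕ)
    (hS : ∀ x ∈ S, ∀ y ∈ S, x ≠ y → x * y ≠ y * x)
    (hmax : ∀ T : Finset G, (∀ x ∈ T, ∀ y ∈ T, x ≠ y → x * y ≠ y * x) → T.card ≤ S.card)
    (hr : S.card = r) (hr34 : r = 3 ∨ r = 4) :
    ∀ μ : ℝ, (commCharpoly G).IsRoot μ → ∃ k : ℤ, μ = (k : ℝ) := by
  intro μ hroot
  classical
  have hb : ∀ T : Finset G, (∀ x ∈ T, ∀ y ∈ T, x ≠ y → x * y ≠ y * x) → T.card ≤ 4 := by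
    intro T hT
    have := hmax T hT
    rcases hr34 with h | h <;> omega
  -- the key transitivity property
  have key : ∀ (u : {x : G // x ∉ Subgroup.center G}) (p q : G),
      p * ↑u = ↑u * p → q * ↑u = ↑u * q → p * q = q * p := by
    intro u p q hp hq
    have hy : ∃ w : G, w * (↑u : G) ≠ ↑u * w := by
      have h2 := u.2
      rw [Subgroup.mem_center_iff] at h2
      push_neg at h2
      exact h2
    exact centralizer_comm hb ↑u hy p q hp hq
  -- spectral part
  have hroot' : Polynomial.eval μ (((commutingGraph G).adjMatrix ℝ).charpoly) = 0 := hroot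
  rw [eval_charpoly'] at hroot'
  obtain ⟨v, hv0, hmv⟩ := Matrix.exists_mulVec_eq_zero_iff.mpr hroot'
  have hAv : ∀ u, ∑ z ∈ (commutingGraph G).neighborFinset u, v z = μ * v u := by
    intro u
    have h2 := congrFun hmv u
    rw [Matrix.sub_mulVec] at h2
    simp only [Pi.sub_apply, Matrix.mulVec_diagonal,
      SimpleGraph.adjMatrix_mulVec_apply, Pi.zero_apply, sub_eq_zero] at h2
    exact h2.symm
  obtain ⟨x, hvx⟩ := Function.ne_iff.mp hv0
  simp only [Pi.zero_apply] at hvx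
  by_cases hμ : μ = -1
  · exact ⟨-1, by simp [hμ]⟩
  set K : Finset {x : G // x ∉ Subgroup.center G} :=
    insert x ((commutingGraph G).neighborFinset x) with hK
  have adj_def : ∀ a b : {x : G // x ∉ Subgroup.center G},
      (commutingGraph G).Adj a b ↔ (a ≠ b ∧ (↑a : G) * ↑b = ↑b * ↑a) := fun a b => Iff.rfl
  have claimN : ∀ u ∈ K, (commutingGraph G).neighborFinset u = K.erase u := by
    intro u hu
    ext z
    rw [SimpleGraph.mem_neighborFinset, Finset.mem_erase, hK, Finset.mem_insert,
      SimpleGraph.mem_neighborFinset]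
    rcases Finset.mem_insert.mp hu with rfl | hxu
    · constructor
      · intro hz
        exact ⟨fun h => ((adj_def _ _).mp hz).1 h.symm, Or.inr hz⟩
      · rintro ⟨hzu, rfl | hz⟩
        · exact absurd rfl hzu
        · exact hz
    · rw [SimpleGraph.mem_neighborFinset] at hxu
      rcases (adj_def x u).mp hxu with ⟨hxune, hxuc⟩
      constructor
      · intro hz
        rcases (adj_def u z).mp hz with ⟨huzne, huzc⟩
        refine ⟨fun h => huzne h.symm, ?_⟩
        by_cases hzx : z = x
        · exact Or.inl hzx
        · refine Or.inr ((adj_def x z).mpr ⟨fun h => hzx h.symm, ?_⟩)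
          exact (key u ↑z ↑x huzc.symm hxuc).symm
      · rintro ⟨hzu, rfl | hz⟩
        · exact hxu.symm
        · rcases (adj_def x z).mp hz with ⟨hxzne, hxzc⟩
          refine (adj_def u z).mpr ⟨fun h => hzu h.symm, ?_⟩
          exact key x ↑u ↑z hxuc.symm hxzc.symm
  have hxK : x ∈ K := Finset.mem_insert_self _ _
  set Sv : ℝ := ∑ z ∈ K, v z with hSv
  have hKsum : ∀ u ∈ K, (μ + 1) * v u = Sv := by
    intro u hu
    have h1 := hAv u
    rw [claimN u hu, Finset.sum_erase_eq_sub hu] at h1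
    linear_combination -h1
  have hS0 : μ + 1 ≠ 0 := fun h => hμ (by linarith)
  have hvconst : ∀ u ∈ K, v u = v x := by
    intro u hu
    apply mul_left_cancel₀ hS0
    rw [hKsum u hu, hKsum x hxK]
  have hsum : Sv = (K.card : ℝ) * v x := by
    rw [hSv, Finset.sum_congr rfl hvconst, Finset.sum_const, nsmul_eq_mul]
  have hfin : μ + 1 = (K.card : ℝ) := by
    apply mul_right_cancel₀ hvx
    rw [hKsum x hxK, hsum]
  exact ⟨(K.card : ℤ) - 1, by push_cast; linarith⟩
end

section
/- Let m > 2 be even and n ≥ 1, and let G be a group of order 2mn generated by elements a and b satisfying a^m = 1, b^(2n) = 1, and b·a·b⁻¹ = a⁻¹ (the metacyclic group M_{2mn}). Then the characteristic polynomial of the adjacency matrix of the commuting graph Γ_G (over the reals) equals (X + 1)^(2mn − 2n − m/2 − 1) · (X − (2n − 1))^(m/2) · (X − (mn − 2n − 1)); in particular G is commuting integral. -/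
open Polynomial

section MatAux
open Matrix

private lemma det_clique {α : Type*} [Fintype α] [DecidableEq α] (hα : 1 ≤ Fintype.card α)
    (t : ℝ) :
    Matrix.det ((t + 1) • (1 : Matrix α α ℝ) - Matrix.of fun _ _ => (1 : ℝ)) =
      (t + 1) ^ (Fintype.card α - 1) * (t + 1 - Fintype.card α) := by
  set N := Fintype.card α with hN
  by_cases h0 : t + 1 = 0
  · rcases eq_or_lt_of_le hα with h1 | h1
    · -- N = 1
      haveI : Unique α := Fintype.card_eq_one_iff_nonempty_unique.mp h1.symm |>.some
      rw [Matrix.det_unique]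
      simp [← h1, h0]
    · obtain ⟨x, y, hxy⟩ := Fintype.exists_pair_of_one_lt_card h1
      rw [Matrix.det_zero_of_row_eq hxy (by ext z; simp [Matrix.one_apply, h0])]
      rw [h0, zero_pow (by omega), zero_mul]
  · obtain ⟨K, hK⟩ : ∃ K, Fintype.card α = K + 1 := ⟨Fintype.card α - 1, by omega⟩
    have key : (t + 1) • (1 : Matrix α α ℝ) - Matrix.of (fun _ _ => (1 : ℝ)) =
        (t + 1) • ((1 : Matrix α α ℝ) +
          Matrix.replicateCol Unit (fun _ => -(t + 1)⁻¹) * Matrix.replicateRow Unit (fun _ => (1 : ℝ))) := by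
      ext i j
      simp [Matrix.mul_apply, Matrix.one_apply, mul_comm, smul_eq_mul, mul_add, h0,
        sub_eq_add_neg]
    rw [key, Matrix.det_smul, Matrix.det_one_add_replicateCol_mul_replicateRow]
    have hd : (fun _ : α => (1:ℝ)) ⬝ᵥ (fun _ : α => -(t+1)⁻¹) = -(((K:ℝ)+1) * (t+1)⁻¹) := by
      simp [dotProduct, Finset.sum_const, Finset.card_univ, hK]
    simp only [hd, hK, show N = K + 1 from hN.trans hK, Nat.add_sub_cancel]
    push_cast
    field_simp
    ring

private lemma det_commClasses {V : Type*} [Fintype V] [DecidableEq V] {N : ℕ}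
    (cl : V → Fin N) (hpos : ∀ k, 1 ≤ Fintype.card {x // cl x = k}) (t : ℝ) :
    ((t + 1) • (1 : Matrix V V ℝ) -
        Matrix.of fun x y => if cl x = cl y then (1 : ℝ) else 0).det =
      ∏ k : Fin N, ((t + 1) ^ (Fintype.card {x // cl x = k} - 1) *
          (t + 1 - Fintype.card {x // cl x = k})) := by
  set M : Matrix V V ℝ :=
    (t + 1) • (1 : Matrix V V ℝ) - Matrix.of fun x y => if cl x = cl y then (1 : ℝ) else 0
    with hM
  have hbt : M.BlockTriangular cl := by
    intro i j hij
    have hne : cl j ≠ cl i := ne_of_lt hij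
    have hne' : i ≠ j := fun h => hne (by rw [h])
    have hne'' : ¬ cl i = cl j := fun h => hne h.symm
    simp [hM, Matrix.one_apply, hne', hne'']
  rw [hbt.det_fintype]
  refine Finset.prod_congr rfl fun k _ => ?_
  have hblock : M.toSquareBlock cl k =
      (t + 1) • (1 : Matrix {x // cl x = k} {x // cl x = k} ℝ) -
        Matrix.of fun _ _ => (1 : ℝ) := by
    ext x y
    have hx := x.2
    have hy := y.2
    simp [Matrix.toSquareBlock, Matrix.toSquareBlockProp, hM, Matrix.one_apply,
      Subtype.ext_iff, hx, hy]
  rw [hblock, det_clique (hpos k)]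

private lemma eval_charpoly_eq {V : Type*} [Fintype V] [DecidableEq V]
    (M : Matrix V V ℝ) (t : ℝ) :
    (M.charpoly).eval t = (t • (1 : Matrix V V ℝ) - M).det := by
  rw [Matrix.charpoly, show (Polynomial.eval t : ℝ[X] → ℝ) = ⇑(Polynomial.evalRingHom t) from rfl,
    RingHom.map_det]
  congr 1
  ext i j
  by_cases h : i = j
  · subst h
    simp [Matrix.map_apply, Matrix.charmatrix_apply_eq, Matrix.one_apply]
  · simp [Matrix.map_apply, Matrix.charmatrix_apply_ne _ _ _ h, Matrix.one_apply, h]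

private lemma even_mod_even {N k : ℕ} (hN : Even N) : Even (k % N) ↔ Even k := by
  have h1 : Even (N * (k / N)) := hN.mul_right _
  conv_rhs => rw [← Nat.div_add_mod k N]
  rw [Nat.even_add]
  tauto

private lemma zmod_card_mod_eq {h : ℕ} [NeZero (2 * h)] (hh : 0 < h) (c : ℕ) (hc : c < h) :
    Fintype.card {i : ZMod (2 * h) // i.val % h = c} = 2 := by
  have hlt : ∀ q : Fin 2, c + h * q.val < 2 * h := by
    intro q
    have hq : q.val ≤ 1 := Nat.lt_succ_iff.mp q.2
    have : h * q.val ≤ h * 1 := Nat.mul_le_mul_left h hq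
    omega
  have e : {i : ZMod (2 * h) // i.val % h = c} ≃ Fin 2 :=
    { toFun := fun i => ⟨i.1.val / h, by
        have hv : i.1.val < 2 * h := ZMod.val_lt i.1
        exact (Nat.div_lt_iff_lt_mul hh).mpr (by omega)⟩
      invFun := fun q => ⟨((c + h * q.val : ℕ) : ZMod (2 * h)), by
        rw [ZMod.val_natCast_of_lt (hlt q), Nat.add_mul_mod_self_left, Nat.mod_eq_of_lt hc]⟩
      left_inv := by
        rintro ⟨i, hi⟩
        apply Subtype.ext
        have hdm := Nat.div_add_mod i.val h
        have : c + h * (i.val / h) = i.val := by omega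
        simp only [this]
        exact ZMod.natCast_zmod_val i
      right_inv := by
        rintro ⟨q, hq⟩
        apply Fin.ext
        simp only [ZMod.val_natCast_of_lt (hlt ⟨q, hq⟩)]
        rw [Nat.add_mul_div_left _ _ hh, Nat.div_eq_of_lt hc]
        simp }
  rw [Fintype.card_congr e, Fintype.card_fin]

private lemma card_even_odd_val {n : ℕ} [NeZero (2 * n)] (hn : 1 ≤ n) :
    Fintype.card {j : ZMod (2 * n) // Even j.val} = n ∧
      Fintype.card {j : ZMod (2 * n) // ¬ Even j.val} = n := by
  haveI : Fact (1 < 2 * n) := ⟨by omega⟩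
  have flip : ∀ j : ZMod (2 * n), Even ((j + 1).val) ↔ ¬ Even j.val := by
    intro j
    rw [ZMod.val_add, ZMod.val_one, even_mod_even (even_two_mul n), Nat.even_add_one]
  have e : {j : ZMod (2 * n) // Even j.val} ≃ {j : ZMod (2 * n) // ¬ Even j.val} :=
    { toFun := fun j => ⟨j.1 + 1, fun hE => ((flip j.1).mp hE) j.2⟩
      invFun := fun j => ⟨j.1 - 1, by
        have h2 := flip (j.1 - 1)
        rw [sub_add_cancel] at h2
        exact not_not.mp fun hc => j.2 (h2.mpr hc)⟩
      left_inv := fun j => Subtype.ext (add_sub_cancel_right _ _)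
      right_inv := fun j => Subtype.ext (sub_add_cancel _ _) }
  have hcompl : Fintype.card {j : ZMod (2 * n) // ¬ Even j.val} =
      Fintype.card (ZMod (2 * n)) - Fintype.card {j : ZMod (2 * n) // Even j.val} :=
    Fintype.card_subtype_compl _
  have hcard := Fintype.card_congr e
  have hle : Fintype.card {j : ZMod (2 * n) // Even j.val} ≤ Fintype.card (ZMod (2 * n)) :=
    Fintype.card_subtype_le _
  rw [ZMod.card] at hcompl hle
  omega
end MatAux


section Grp

variable {G : Type*} [Group G] {m n : ℕ} {a b : G}

private lemma pow_mod_eq (g : G) {N : ℕ} (h : g ^ N = 1) (k : ℕ) : g ^ (k % N) = g ^ k := by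
  conv_rhs => rw [← Nat.div_add_mod k N, pow_add, pow_mul, h, one_pow, one_mul]

private lemma hba (hrel : b * a * b⁻¹ = a⁻¹) (t : ℕ) : b * a ^ t = (a ^ t)⁻¹ * b := by
  have h1 : b * a ^ t * b⁻¹ = (a ^ t)⁻¹ := by rw [← conj_pow, hrel, inv_pow]
  rw [← h1]; group

private lemma hb2 (hrel : b * a * b⁻¹ = a⁻¹) : Commute (b ^ 2) a := by
  show b ^ 2 * a = a * b ^ 2
  have h1 : b * a⁻¹ * b⁻¹ = a := by
    rw [show b * a⁻¹ * b⁻¹ = (b * a * b⁻¹)⁻¹ by group, hrel, inv_inv]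
  have h2 : b * a = a⁻¹ * b := by rw [← hrel]; group
  calc b ^ 2 * a = b * (b * a) := by rw [sq, mul_assoc]
    _ = b * (a⁻¹ * b) := by rw [h2]
    _ = (b * a⁻¹ * b⁻¹) * (b * b) := by group
    _ = a * b ^ 2 := by rw [h1, sq]

private lemma swap_even (hrel : b * a * b⁻¹ = a⁻¹) {j : ℕ} (hj : Even j) (t : ℕ) :
    b ^ j * a ^ t = a ^ t * b ^ j := by
  obtain ⟨c, rfl⟩ := hj
  have h : Commute ((b ^ 2) ^ c) (a ^ t) := (hb2 hrel).pow_pow c t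
  rw [show c + c = 2 * c by ring, pow_mul]
  exact h.eq

private lemma swap_odd (hrel : b * a * b⁻¹ = a⁻¹) {j : ℕ} (hj : Odd j) (t : ℕ) :
    b ^ j * a ^ t = (a ^ t)⁻¹ * b ^ j := by
  obtain ⟨c, rfl⟩ := hj
  have hc : Commute ((b ^ 2) ^ c) ((a ^ t)⁻¹) :=
    ((hb2 hrel).pow_pow c t).inv_right
  rw [pow_succ, pow_mul]
  calc (b ^ 2) ^ c * b * a ^ t = (b ^ 2) ^ c * (b * a ^ t) := by group
    _ = (b ^ 2) ^ c * ((a ^ t)⁻¹ * b) := by rw [hba hrel]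
    _ = (a ^ t)⁻¹ * ((b ^ 2) ^ c * b) := by rw [← mul_assoc, hc.eq, mul_assoc]
    _ = (a ^ t)⁻¹ * ((b ^ 2) ^ c * b) := rfl

private lemma phiPow_add (g : G) {N : ℕ} [NeZero N] (hg : g ^ N = 1) (i k : ZMod N) :
    g ^ (i + k).val = g ^ i.val * g ^ k.val := by
  rw [ZMod.val_add, pow_mod_eq g hg, pow_add]

private lemma phiPow_neg (g : G) {N : ℕ} [NeZero N] (hg : g ^ N = 1) (i : ZMod N) :
    g ^ (-i).val = (g ^ i.val)⁻¹ := by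
  have h1 : g ^ (-i + i).val = g ^ (-i).val * g ^ i.val := phiPow_add g hg _ _
  rw [neg_add_cancel, ZMod.val_zero, pow_zero] at h1
  exact eq_inv_of_mul_eq_one_left h1.symm

private def phiFn (a b : G) (m n : ℕ) : ZMod m × ZMod (2 * n) → G :=
  fun p => a ^ p.1.val * b ^ p.2.val

private lemma phi_mul [NeZero m] [NeZero (2 * n)]
    (ha : a ^ m = 1) (hb : b ^ (2 * n) = 1) (hrel : b * a * b⁻¹ = a⁻¹)
    (p q : ZMod m × ZMod (2 * n)) :
    phiFn a b m n p * phiFn a b m n q =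
      phiFn a b m n (p.1 + (if Even p.2.val then q.1 else -q.1), p.2 + q.2) := by
  unfold phiFn
  dsimp only
  by_cases hp : Even p.2.val
  · rw [if_pos hp]
    calc a ^ p.1.val * b ^ p.2.val * (a ^ q.1.val * b ^ q.2.val)
        = a ^ p.1.val * (b ^ p.2.val * a ^ q.1.val) * b ^ q.2.val := by group
      _ = a ^ p.1.val * (a ^ q.1.val * b ^ p.2.val) * b ^ q.2.val := by
          rw [swap_even hrel hp]
      _ = (a ^ p.1.val * a ^ q.1.val) * (b ^ p.2.val * b ^ q.2.val) := by group
      _ = a ^ (p.1 + q.1).val * b ^ (p.2 + q.2).val := by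
          rw [phiPow_add a ha, phiPow_add b hb]
  · rw [if_neg hp]
    calc a ^ p.1.val * b ^ p.2.val * (a ^ q.1.val * b ^ q.2.val)
        = a ^ p.1.val * (b ^ p.2.val * a ^ q.1.val) * b ^ q.2.val := by group
      _ = a ^ p.1.val * ((a ^ q.1.val)⁻¹ * b ^ p.2.val) * b ^ q.2.val := by
          rw [swap_odd hrel (Nat.not_even_iff_odd.mp hp)]
      _ = (a ^ p.1.val * (a ^ q.1.val)⁻¹) * (b ^ p.2.val * b ^ q.2.val) := by group
      _ = a ^ (p.1 + -q.1).val * b ^ (p.2 + q.2).val := by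
          rw [phiPow_add a ha, phiPow_add b hb, phiPow_neg a ha]

end Grp

theorem commuting_integral_metacyclic_even
    (m n : ℕ) (hm : 2 < m) (hmeven : Even m) (hn : 1 ≤ n)
    (G : Type*) [Group G] [Fintype G] (a b : G)
    (hcard : Nat.card G = 2 * m * n)
    (ha : a ^ m = 1) (hb : b ^ (2 * n) = 1) (hrel : b * a * b⁻¹ = a⁻¹)
    (hgen : Subgroup.closure ({a, b} : Set G) = ⊤) :
    commCharpoly G =
        (X + 1) ^ (2 * m * n - 2 * n - m / 2 - 1) *
          (X - C (2 * (n : ℝ) - 1)) ^ (m / 2) *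
          (X - C ((m : ℝ) * n - 2 * n - 1)) ∧
      ∀ μ : ℝ, (commCharpoly G).IsRoot μ → ∃ k : ℤ, μ = (k : ℝ) := by
  classical
  haveI hmz : NeZero m := ⟨by omega⟩
  haveI : NeZero (2 * n) := ⟨by omega⟩
  haveI : Fact (1 < m) := ⟨by omega⟩
  haveI : Fact (1 < 2 * n) := ⟨by omega⟩
  obtain ⟨h, hm2⟩ : ∃ h, m = 2 * h := by
    obtain ⟨p, hp⟩ := hmeven; exact ⟨p, by omega⟩
  subst hm2
  have hh2 : 2 ≤ h := by omega
  have hhpos : 0 < h := by omega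
  set φ : ZMod (2 * h) × ZMod (2 * n) → G := phiFn a b (2 * h) n with hphidef
  have phi_a : φ (1, 0) = a := by
    show a ^ (1 : ZMod (2 * h)).val * b ^ (0 : ZMod (2 * n)).val = a
    rw [ZMod.val_one, ZMod.val_zero, pow_one, pow_zero, mul_one]
  have phi_b : φ (0, 1) = b := by
    show a ^ (0 : ZMod (2 * h)).val * b ^ (1 : ZMod (2 * n)).val = b
    rw [ZMod.val_one, ZMod.val_zero, pow_one, pow_zero, one_mul]
  have phi_one : φ (0, 0) = 1 := by
    show a ^ (0 : ZMod (2 * h)).val * b ^ (0 : ZMod (2 * n)).val = 1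
    rw [ZMod.val_zero, ZMod.val_zero, pow_zero, pow_zero, mul_one]
  have val1odd : ¬ Even ((1 : ZMod (2 * n)).val) := by
    rw [ZMod.val_one]; decide
  have val0even : Even ((0 : ZMod (2 * n)).val) := by
    rw [ZMod.val_zero]; exact Even.zero
  have hmul : ∀ p q : ZMod (2 * h) × ZMod (2 * n),
      φ p * φ q = φ (p.1 + (if Even p.2.val then q.1 else -q.1), p.2 + q.2) :=
    phi_mul ha hb hrel
  -- surjectivity
  have hsurj : Function.Surjective φ := by
    intro g
    have hg : g ∈ Subgroup.closure ({a, b} : Set G) := by rw [hgen]; trivial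
    refine Subgroup.closure_induction (p := fun x _ => ∃ p, φ p = x) ?_ ?_ ?_ ?_ hg
    · rintro x (rfl | rfl)
      exacts [⟨(1, 0), phi_a⟩, ⟨(0, 1), phi_b⟩]
    · exact ⟨(0, 0), phi_one⟩
    · rintro x y _ _ ⟨p, rfl⟩ ⟨q, rfl⟩; exact ⟨_, (hmul p q).symm⟩
    · rintro x _ ⟨p, rfl⟩
      refine ⟨((if Even p.2.val then -p.1 else p.1), -p.2), ?_⟩
      have h1 : φ p * φ ((if Even p.2.val then -p.1 else p.1), -p.2) = 1 := by
        rw [hmul, ← phi_one]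
        congr 1
        by_cases hp : Even p.2.val <;> simp [hp]
      exact (inv_eq_of_mul_eq_one_right h1).symm
  have hbij : Function.Bijective φ := by
    rw [Fintype.bijective_iff_surjective_and_card]
    refine ⟨hsurj, ?_⟩
    rw [Fintype.card_prod, ZMod.card, ZMod.card, ← Nat.card_eq_fintype_card, hcard]
    ring
  have hinj := hbij.injective
  -- 2 ≠ 0 in ZMod m
  have h2ne : (2 : ZMod (2 * h)) ≠ 0 := by
    intro hcon
    have h22 : ((2 : ℕ) : ZMod (2 * h)) = 0 := by exact_mod_cast hcon
    rw [ZMod.natCast_eq_zero_iff] at h22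
    have := Nat.le_of_dvd (by norm_num) h22
    omega
  -- center characterization
  have hcenter : ∀ p : ZMod (2 * h) × ZMod (2 * n),
      φ p ∈ Subgroup.center G ↔ (Even p.2.val ∧ 2 * p.1 = 0) := by
    intro p
    constructor
    · intro hc
      have hca : a * φ p = φ p * a := Subgroup.mem_center_iff.mp hc a
      have hcb : b * φ p = φ p * b := Subgroup.mem_center_iff.mp hc b
      rw [← phi_a, hmul, hmul p] at hca
      rw [← phi_b, hmul, hmul p] at hcb
      have hpe : Even p.2.val := by
        by_contra hodd
        have h1 := congrArg Prod.fst (hinj hca)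
        simp only [if_pos val0even, if_neg hodd] at h1
        exact h2ne (by linear_combination h1)
      refine ⟨hpe, ?_⟩
      have h1 := congrArg Prod.fst (hinj hcb)
      simp only [if_neg val1odd, if_pos hpe] at h1
      linear_combination - h1
    · rintro ⟨hpe, h2p⟩
      rw [Subgroup.mem_center_iff]
      intro g
      obtain ⟨q, rfl⟩ := hsurj g
      rw [hmul, hmul]
      apply congrArg φ
      refine Prod.ext ?_ (add_comm _ _)
      by_cases hq : Even q.2.val
      · simp only [if_pos hq, if_pos hpe]
        exact add_comm _ _
      · simp only [if_neg hq, if_pos hpe]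
        linear_combination -h2p
  -- two*= iff mod h
  have htwo : ∀ i k : ZMod (2 * h), (2 * i = 2 * k) ↔ i.val % h = k.val % h := by
    intro i k
    have hi : ((i.val : ℕ) : ZMod (2 * h)) = i := ZMod.natCast_zmod_val i
    have hk : ((k.val : ℕ) : ZMod (2 * h)) = k := ZMod.natCast_zmod_val k
    constructor
    · intro he
      have hcast : ((2 * i.val : ℕ) : ZMod (2 * h)) = ((2 * k.val : ℕ) : ZMod (2 * h)) := by
        push_cast [hi, hk]
        exact he
      rw [ZMod.natCast_eq_natCast_iff] at hcast
      exact Nat.ModEq.mul_left_cancel' (by norm_num) hcast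
    · intro he
      have hmod : Nat.ModEq h i.val k.val := he
      have hcast : ((2 * i.val : ℕ) : ZMod (2 * h)) = ((2 * k.val : ℕ) : ZMod (2 * h)) :=
        (ZMod.natCast_eq_natCast_iff _ _ _).mpr (Nat.ModEq.mul_left' 2 hmod)
      push_cast [hi, hk] at hcast
      exact hcast
  have htwo0 : ∀ i : ZMod (2 * h), (2 * i = 0) ↔ i.val % h = 0 := by
    intro i
    have := htwo i 0
    simpa using this
  -- class function
  set e : (ZMod (2 * h) × ZMod (2 * n)) ≃ G := Equiv.ofBijective φ hbij with hedef
  have he_app : ∀ p, e p = φ p := fun p => rfl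
  have hx_phi : ∀ x : G, φ (e.symm x) = x := fun x => e.apply_symm_apply x
  have hsymm_phi : ∀ p, e.symm (φ p) = p := fun p => e.symm_apply_apply p
  set clP : ZMod (2 * h) × ZMod (2 * n) → Fin (h + 1) := fun p =>
    if Even p.2.val then 0 else ⟨p.1.val % h + 1, Nat.succ_lt_succ (Nat.mod_lt _ hhpos)⟩
    with hclP
  set V := {x : G // x ∉ Subgroup.center G} with hV
  set cl : V → Fin (h + 1) := fun x => clP (e.symm x.1) with hcl
  -- commuting iff same class, pair level
  have hcommP : ∀ p q : ZMod (2 * h) × ZMod (2 * n),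
      φ p ∉ Subgroup.center G → φ q ∉ Subgroup.center G →
      (φ p * φ q = φ q * φ p ↔ clP p = clP q) := by
    intro p q hp hq
    rw [hcenter] at hp hq
    rw [hmul, hmul]
    constructor
    · intro heq
      have hpr := congrArg Prod.fst (hinj heq)
      dsimp only at hpr
      by_cases hp2 : Even p.2.val <;> by_cases hq2 : Even q.2.val
      · simp [hclP, hp2, hq2]
      · rw [if_pos hp2, if_neg hq2] at hpr
        exact absurd ⟨hp2, by linear_combination hpr⟩ hp
      · rw [if_neg hp2, if_pos hq2] at hpr
        exact absurd ⟨hq2, by linear_combination - hpr⟩ hq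
      · rw [if_neg hp2, if_neg hq2] at hpr
        have h2 : 2 * p.1 = 2 * q.1 := by linear_combination hpr
        rw [htwo] at h2
        simp only [hclP, if_neg hp2, if_neg hq2]
        exact Fin.ext (by simp [h2])
    · intro hcleq
      by_cases hp2 : Even p.2.val <;> by_cases hq2 : Even q.2.val
      · simp only [if_pos hp2, if_pos hq2]
        exact congrArg φ (Prod.ext (add_comm _ _) (add_comm _ _))
      · exfalso
        simp [hclP, hp2, hq2, Fin.ext_iff] at hcleq
      · exfalso
        simp [hclP, hp2, hq2, Fin.ext_iff] at hcleq
      · have hmod : p.1.val % h = q.1.val % h := by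
          simpa [hclP, hp2, hq2, Fin.ext_iff] using hcleq
        have h2 := (htwo _ _).mpr hmod
        simp only [if_neg hp2, if_neg hq2]
        exact congrArg φ (Prod.ext (by linear_combination h2) (add_comm _ _))
  have hcomm : ∀ x y : V, ((x.1 * y.1 = y.1 * x.1) ↔ cl x = cl y) := by
    intro x y
    have hx := hx_phi x.1
    have hy := hx_phi y.1
    have hres := hcommP (e.symm x.1) (e.symm y.1)
      (by rw [hx]; exact x.2) (by rw [hy]; exact y.2)
    rw [hx, hy] at hres
    exact hres
  -- fibers
  have E1 : ∀ k : Fin (h + 1), {x : V // cl x = k} ≃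
      {p : ZMod (2 * h) × ZMod (2 * n) // φ p ∉ Subgroup.center G ∧ clP p = k} := by
    intro k
    refine ⟨fun x => ⟨e.symm x.1.1, ⟨by rw [hx_phi x.1.1]; exact x.1.2, x.2⟩⟩,
        fun p => ⟨⟨φ p.1, p.2.1⟩, by show clP (e.symm (φ p.1)) = k; rw [hsymm_phi]; exact p.2.2⟩,
        ?_, ?_⟩
    · intro x
      apply Subtype.ext
      apply Subtype.ext
      exact hx_phi x.1.1
    · intro p
      apply Subtype.ext
      exact hsymm_phi p.1
  have hcond0 : ∀ p : ZMod (2 * h) × ZMod (2 * n),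
      (φ p ∉ Subgroup.center G ∧ clP p = 0) ↔ (¬ p.1.val % h = 0 ∧ Even p.2.val) := by
    intro p
    rw [hcenter]
    by_cases hp2 : Even p.2.val
    · simp only [hclP, if_pos hp2, htwo0 p.1]
      simp [hp2]
    · simp [hclP, hp2, Fin.ext_iff]
  have hcondS : ∀ (c : Fin h) (p : ZMod (2 * h) × ZMod (2 * n)),
      (φ p ∉ Subgroup.center G ∧ clP p = c.succ) ↔
        (p.1.val % h = c.val ∧ ¬ Even p.2.val) := by
    intro c p
    rw [hcenter]
    by_cases hp2 : Even p.2.val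
    · simp [hclP, hp2, Fin.ext_iff]
    · simp [hclP, hp2, Fin.ext_iff]
  -- cards
  have hcardEven := (card_even_odd_val (n := n) hn).1
  have hcardOdd := (card_even_odd_val (n := n) hn).2
  have hcard2 : ∀ c : ℕ, c < h →
      Fintype.card {i : ZMod (2 * h) // i.val % h = c} = 2 :=
    fun c hc => zmod_card_mod_eq hhpos c hc
  have hcard0 : Fintype.card {x : V // cl x = 0} = (2 * h - 2) * n := by
    rw [Fintype.card_congr ((E1 0).trans ((Equiv.subtypeEquivRight hcond0).trans
      (Equiv.subtypeProdEquivProd (p := fun i : ZMod (2 * h) => ¬ i.val % h = 0)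
        (q := fun j : ZMod (2 * n) => Even j.val))))]
    rw [Fintype.card_prod, hcardEven]
    have hA : Fintype.card {i : ZMod (2 * h) // ¬ i.val % h = 0} = 2 * h - 2 := by
      have hc := Fintype.card_subtype_compl (fun i : ZMod (2 * h) => i.val % h = 0)
      rw [ZMod.card, hcard2 0 hhpos] at hc
      exact hc
    rw [hA]
  have hcardS : ∀ c : Fin h, Fintype.card {x : V // cl x = c.succ} = 2 * n := by
    intro c
    rw [Fintype.card_congr ((E1 c.succ).trans ((Equiv.subtypeEquivRight (hcondS c)).trans
      (Equiv.subtypeProdEquivProd (p := fun i : ZMod (2 * h) => i.val % h = c.val)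
        (q := fun j : ZMod (2 * n) => ¬ Even j.val))))]
    rw [Fintype.card_prod, hcardOdd, hcard2 c.val c.2]
  have hpos : ∀ k : Fin (h + 1), 1 ≤ Fintype.card {x : V // cl x = k} := by
    intro k
    rcases Fin.eq_zero_or_eq_succ k with rfl | ⟨c, rfl⟩
    · rw [hcard0]
      exact Nat.succ_le_of_lt (Nat.mul_pos (by omega) (by omega))
    · rw [hcardS c]
      omega
  -- main polynomial identity
  have key : commCharpoly G =
      (X + 1) ^ (2 * (2 * h) * n - 2 * n - (2 * h) / 2 - 1) *
        (X - C (2 * (n : ℝ) - 1)) ^ ((2 * h) / 2) *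
        (X - C (((2 * h : ℕ) : ℝ) * n - 2 * n - 1)) := by
    apply Polynomial.funext
    intro t
    unfold commCharpoly
    rw [eval_charpoly_eq]
    have hMeq : t • (1 : Matrix V V ℝ) - (commutingGraph G).adjMatrix ℝ =
        (t + 1) • (1 : Matrix V V ℝ) -
          Matrix.of fun x y => if cl x = cl y then (1 : ℝ) else 0 := by
      ext x y
      by_cases hxy : x = y
      · subst hxy
        simp only [Matrix.sub_apply]
        rw [SimpleGraph.adjMatrix_apply, if_neg (SimpleGraph.irrefl _)]
        simp [Matrix.one_apply, SimpleGraph.adjMatrix_apply, commutingGraph]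
      · have hadj : (commutingGraph G).Adj x y ↔ cl x = cl y := by
          rw [show (commutingGraph G).Adj x y ↔ (x ≠ y ∧ (x.1 * y.1 = y.1 * x.1)) from Iff.rfl,
            hcomm x y]
          simp [hxy]
        simp [Matrix.one_apply, hxy, SimpleGraph.adjMatrix_apply, hadj]
    rw [hMeq, det_commClasses cl hpos t, Fin.prod_univ_succ, hcard0]
    have hprodS : (∏ c : Fin h, ((t + 1) ^ (Fintype.card {x : V // cl x = c.succ} - 1) *
        (t + 1 - (Fintype.card {x : V // cl x = c.succ} : ℝ)))) =
        ((t + 1) ^ (2 * n - 1) * (t + 1 - ((2 * n : ℕ) : ℝ))) ^ h := by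
      rw [Finset.prod_congr rfl (fun c _ => by rw [hcardS c]), Finset.prod_const,
        Finset.card_univ, Fintype.card_fin]
    rw [hprodS]
    have hdiv : (2 * h) / 2 = h := by omega
    rw [hdiv]
    have hE : 2 * (2 * h) * n - 2 * n - h - 1 = ((2 * h - 2) * n - 1) + (2 * n - 1) * h := by
      obtain ⟨u, hu⟩ : ∃ u, u = h * n := ⟨_, rfl⟩
      have e1 : (2 * h - 2) * n = 2 * u - 2 * n := by
        rw [hu, Nat.sub_mul]; congr 1; ring
      have e2 : 2 * (2 * h) * n = 4 * u := by rw [hu]; ring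
      have e3 : (2 * n - 1) * h = 2 * u - h := by
        rw [hu, Nat.sub_mul, one_mul]; congr 1; ring
      have hnle : 2 * n ≤ u := by
        have := Nat.mul_le_mul_right n hh2; omega
      have e4 : h ≤ u := by
        have : h * 1 ≤ h * n := Nat.mul_le_mul_left h hn; omega
      rw [e1, e2, e3]
      clear hu e1 e2 e3
      omega
    have hc1 : (((2 * h - 2) * n : ℕ) : ℝ) = 2 * (h : ℝ) * n - 2 * n := by
      have e1 : (2 * h - 2) * n = 2 * h * n - 2 * n := by
        rw [Nat.sub_mul]
      rw [e1, Nat.cast_sub (by nlinarith)]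
      push_cast
      ring
    simp only [eval_mul, eval_pow, eval_add, eval_sub, eval_X, eval_C, eval_one]
    rw [hE, pow_add, hc1, mul_pow, ← pow_mul]
    push_cast
    ring
  refine ⟨key, ?_⟩
  intro μ hroot
  rw [key] at hroot
  have h0 : ((μ + 1) ^ (2 * (2 * h) * n - 2 * n - (2 * h) / 2 - 1) *
      (μ - (2 * (n : ℝ) - 1)) ^ ((2 * h) / 2)) *
      (μ - (((2 * h : ℕ) : ℝ) * n - 2 * n - 1)) = 0 := by
    simpa only [Polynomial.IsRoot, eval_mul, eval_pow, eval_add, eval_sub, eval_X, eval_C,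
      eval_one] using hroot
  rcases mul_eq_zero.mp h0 with h1 | h1
  · rcases mul_eq_zero.mp h1 with h2 | h2
    · have hμ : μ + 1 = 0 := by
        by_contra hne
        exact (pow_ne_zero _ hne) h2
      exact ⟨-1, by push_cast; linarith⟩
    · have hμ : μ - (2 * (n : ℝ) - 1) = 0 := by
        by_contra hne
        exact (pow_ne_zero _ hne) h2
      exact ⟨2 * (n : ℤ) - 1, by push_cast; linarith⟩
  · refine ⟨2 * (h : ℤ) * n - 2 * n - 1, ?_⟩
    have h2 := sub_eq_zero.mp h1
    push_cast at h2 ⊢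
    linarith
end
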